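/- Let α ∈ {+1, −1}, let A and B = A + α Z Zᵀ be n×n real symmetric positive definite matrices, where Z is n×k. Let C̃ be an n×n symmetric positive semidefinite matrix such that A^{1/2} + α C̃ is positive definite, and define the residual R(C̃) = Z Zᵀ − A^{1/2} C̃ − C̃ A^{1/2} − α C̃². Then ‖(A + α Z Zᵀ)^{1/2} − (A^{1/2} + α C̃)‖_F ≤ (n^{1/2} ‖R(C̃)‖_F)^{1/2} and ‖(A + α Z Zᵀ)^{1/2} − (A^{1/2} + α C̃)‖₂ ≤ min( ‖R(C̃)‖_F / √(λ_min(A + α Z Zᵀ)), (n^{1/2} ‖R(C̃)‖_F)^{1/2} ). -/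

import Mathlib

open Matrix

/-- The Frobenius norm of a real matrix. -/
noncomputable def frobNorm {n m : ℕ} (M : Matrix (Fin n) (Fin m) ℝ) : ℝ :=
  Real.sqrt (∑ i, ∑ j, (M i j) ^ 2)

/-- Helper (removed from Mathlib): `Aᵀ * A` is Hermitian over a ring with trivial star. -/
theorem Matrix.isHermitian_transpose_mul_self {m n : Type*} {α : Type*} [CommSemiring α]
    [StarRing α] [TrivialStar α] [Fintype m] (A : Matrix m n α) : (Aᵀ * A).IsHermitian := by
  rw [IsHermitian, conjTranspose, transpose_mul, transpose_transpose]
  ext i j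
  simp [Matrix.mul_apply, mul_comm]

section
open scoped ComplexOrder

/-- The positive semidefinite square root, with its old Mathlib definition (removed). -/
noncomputable def Matrix.PosSemidef.sqrt {𝕜 : Type*} [RCLike 𝕜] {n : Type*} [Fintype n]
    [DecidableEq n] {A : Matrix n n 𝕜} (hA : A.PosSemidef) : Matrix n n 𝕜 :=
  hA.1.eigenvectorUnitary.1 * diagonal ((↑) ∘ (√·) ∘ hA.1.eigenvalues) *
  (star hA.1.eigenvectorUnitary : Matrix n n 𝕜)

end

/-- The spectral norm (largest singular value) of a real square matrix. -/
noncomputable def specNorm {n : ℕ} (M : Matrix (Fin n) (Fin n) ℝ) : ℝ :=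
  ⨆ i, Real.sqrt ((Matrix.isHermitian_transpose_mul_self M).eigenvalues i)

/-- The smallest eigenvalue of a real symmetric matrix. -/
noncomputable def lambdaMin {n : ℕ} {M : Matrix (Fin n) (Fin n) ℝ}
    (hM : M.IsHermitian) : ℝ :=
  ⨅ i, hM.eigenvalues i

namespace SqrtAux

variable {n : ℕ}

lemma sum_sq_eq_trace (N : Matrix (Fin n) (Fin n) ℝ) :
    ∑ i, ∑ j, N i j ^ 2 = trace (Nᵀ * N) := by
  simp only [Matrix.trace, Matrix.diag, Matrix.mul_apply, Matrix.transpose_apply, pow_two]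
  exact Finset.sum_comm ..

lemma sum_sq_conj (U R : Matrix (Fin n) (Fin n) ℝ) (h1 : Uᵀ * U = 1) (h2 : U * Uᵀ = 1) :
    ∑ i, ∑ j, ((Uᵀ * R * U) i j) ^ 2 = ∑ i, ∑ j, R i j ^ 2 := by
  rw [sum_sq_eq_trace, sum_sq_eq_trace]
  have h3 : (Uᵀ * R * U)ᵀ * (Uᵀ * R * U) = Uᵀ * (Rᵀ * R) * U := by
    have e : U * (Uᵀ * (R * U)) = R * U := by rw [← Matrix.mul_assoc, h2, Matrix.one_mul]
    simp only [Matrix.transpose_mul, Matrix.transpose_transpose, Matrix.mul_assoc, e]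
  rw [h3, Matrix.trace_mul_cycle, ← Matrix.mul_assoc, h2, Matrix.one_mul]

section herm
variable {M : Matrix (Fin n) (Fin n) ℝ} (hM : M.IsHermitian)

lemma transpose_eq (hM : M.IsHermitian) : Mᵀ = M := by
  rw [← Matrix.conjTranspose_eq_transpose_of_trivial]; exact hM

noncomputable def eU (hM : M.IsHermitian) : Matrix (Fin n) (Fin n) ℝ :=
  hM.eigenvectorUnitary

lemma eU_mul_t : eU hM * (eU hM)ᵀ = 1 := by
  have h := Matrix.mem_unitaryGroup_iff.mp hM.eigenvectorUnitary.2
  rwa [Matrix.star_eq_conjTranspose, Matrix.conjTranspose_eq_transpose_of_trivial] at h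

lemma eU_t_mul : (eU hM)ᵀ * eU hM = 1 := by
  have h := Matrix.mem_unitaryGroup_iff'.mp hM.eigenvectorUnitary.2
  rwa [Matrix.star_eq_conjTranspose, Matrix.conjTranspose_eq_transpose_of_trivial] at h

lemma spectral' : M = eU hM * Matrix.diagonal hM.eigenvalues * (eU hM)ᵀ := by
  have h := hM.spectral_theorem
  simp only [Unitary.conjStarAlgAut_apply, Unitary.coe_star] at h
  rwa [Matrix.star_eq_conjTranspose, Matrix.conjTranspose_eq_transpose_of_trivial,
    show (RCLike.ofReal ∘ hM.eigenvalues : Fin n → ℝ) = hM.eigenvalues from rfl] at h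

lemma conj_smul_one (c : ℝ) : eU hM * (c • 1) * (eU hM)ᵀ = c • (1 : Matrix (Fin n) (Fin n) ℝ) := by
  rw [mul_smul_comm, smul_mul_assoc, Matrix.mul_one, eU_mul_t hM]

lemma smul_one_eq_diagonal' (c : ℝ) :
    c • (1 : Matrix (Fin n) (Fin n) ℝ) = Matrix.diagonal (fun _ => c) := by
  funext i j
  by_cases h : i = j <;>
    simp [Matrix.diagonal_apply, Matrix.one_apply, h]

lemma sub_smul_eq (c : ℝ) :
    M - c • 1 = eU hM * Matrix.diagonal (fun i => hM.eigenvalues i - c) * (eU hM)ᵀ := by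
  have h1 : Matrix.diagonal (fun i => hM.eigenvalues i - c)
      = Matrix.diagonal hM.eigenvalues - c • 1 := by
    rw [smul_one_eq_diagonal', Matrix.diagonal_sub]
  rw [h1, Matrix.mul_sub, Matrix.sub_mul, conj_smul_one hM, ← spectral' hM]

lemma smul_sub_eq (c : ℝ) :
    c • 1 - M = eU hM * Matrix.diagonal (fun i => c - hM.eigenvalues i) * (eU hM)ᵀ := by
  have h1 : Matrix.diagonal (fun i => c - hM.eigenvalues i)
      = c • 1 - Matrix.diagonal hM.eigenvalues := by
    rw [smul_one_eq_diagonal', Matrix.diagonal_sub]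
  rw [h1, Matrix.mul_sub, Matrix.sub_mul, conj_smul_one hM, ← spectral' hM]

lemma mul_self_eq :
    M * M = eU hM * Matrix.diagonal (fun i => hM.eigenvalues i ^ 2) * (eU hM)ᵀ := by
  conv_lhs => rw [spectral' hM]
  have e : (eU hM)ᵀ * (eU hM * (Matrix.diagonal hM.eigenvalues * (eU hM)ᵀ))
      = Matrix.diagonal hM.eigenvalues * (eU hM)ᵀ := by
    rw [← Matrix.mul_assoc, eU_t_mul hM, Matrix.one_mul]
  simp only [Matrix.mul_assoc, e]
  rw [← Matrix.mul_assoc (Matrix.diagonal hM.eigenvalues), Matrix.diagonal_mul_diagonal]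
  have hd : (fun i => hM.eigenvalues i * hM.eigenvalues i)
      = fun i => hM.eigenvalues i ^ 2 := by
    funext i; exact (pow_two _).symm
  rw [hd]

lemma smul_one_sub_sq (c : ℝ) :
    c • 1 - M * M
      = eU hM * Matrix.diagonal (fun i => c - hM.eigenvalues i ^ 2) * (eU hM)ᵀ := by
  have h1 : Matrix.diagonal (fun i => c - hM.eigenvalues i ^ 2)
      = c • 1 - Matrix.diagonal (fun i => hM.eigenvalues i ^ 2) := by
    rw [smul_one_eq_diagonal', Matrix.diagonal_sub]
  rw [h1, Matrix.mul_sub, Matrix.sub_mul, conj_smul_one hM, ← mul_self_eq hM]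

lemma conj_diag_psd (d : Fin n → ℝ) (hd : ∀ i, 0 ≤ d i) :
    (eU hM * Matrix.diagonal d * (eU hM)ᵀ).PosSemidef := by
  have h := Matrix.PosSemidef.mul_mul_conjTranspose_same
    (Matrix.posSemidef_diagonal_iff.mpr hd) (eU hM)
  rwa [Matrix.conjTranspose_eq_transpose_of_trivial] at h

lemma psd_sub_smul {c : ℝ} (h : ∀ i, c ≤ hM.eigenvalues i) : (M - c • 1).PosSemidef := by
  rw [sub_smul_eq hM c]
  exact conj_diag_psd hM _ (fun i => sub_nonneg.mpr (h i))

lemma psd_smul_sub_sq {c : ℝ} (h : ∀ i, hM.eigenvalues i ^ 2 ≤ c) :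
    (c • 1 - M * M).PosSemidef := by
  rw [smul_one_sub_sq hM c]
  exact conj_diag_psd hM _ (fun i => sub_nonneg.mpr (h i))

noncomputable def ucol (hM : M.IsHermitian) (i : Fin n) : Fin n → ℝ := fun j => eU hM j i

lemma ucol_dot (i : Fin n) : ucol hM i ⬝ᵥ ucol hM i = 1 := by
  have h := congrFun (congrFun (eU_t_mul hM) i) i
  simpa [Matrix.mul_apply, Matrix.one_apply, dotProduct, ucol,
    Matrix.transpose_apply] using h

lemma mulVec_ucol (i : Fin n) : M *ᵥ ucol hM i = hM.eigenvalues i • ucol hM i := by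
  have h := congrArg (fun X => X * eU hM) (spectral' hM)
  simp only [Matrix.mul_assoc] at h
  rw [eU_t_mul hM, Matrix.mul_one] at h
  funext j
  have h2 := congrFun (congrFun h j) i
  rw [Matrix.mul_apply, Matrix.mul_diagonal] at h2
  simp only [Matrix.mulVec, dotProduct, ucol, Pi.smul_apply, smul_eq_mul]
  rw [h2, mul_comm]

lemma diag_conj (R : Matrix (Fin n) (Fin n) ℝ) (i : Fin n) :
    ((eU hM)ᵀ * R * eU hM) i i = ucol hM i ⬝ᵥ (R *ᵥ ucol hM i) := by
  simp only [Matrix.mul_apply, dotProduct, Matrix.mulVec, ucol, Matrix.transpose_apply,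
    Finset.sum_mul, Finset.mul_sum]
  rw [Finset.sum_comm]
  apply Finset.sum_congr rfl
  intro l _
  apply Finset.sum_congr rfl
  intro j _
  ring

lemma eig_le_of_psd {c : ℝ}
    (h : (c • (1 : Matrix (Fin n) (Fin n) ℝ) - M).PosSemidef) (i : Fin n) :
    hM.eigenvalues i ≤ c := by
  have h2 := h.dotProduct_mulVec_nonneg (ucol hM i)
  rw [star_trivial, Matrix.sub_mulVec, Matrix.smul_mulVec, Matrix.one_mulVec,
    mulVec_ucol hM i, dotProduct_sub, dotProduct_smul, dotProduct_smul,
    ucol_dot hM i] at h2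
  simp only [smul_eq_mul, mul_one] at h2
  linarith

lemma sum_sq_entries : ∑ i, ∑ j, M i j ^ 2 = ∑ i, hM.eigenvalues i ^ 2 := by
  rw [sum_sq_eq_trace, transpose_eq hM, mul_self_eq hM, Matrix.trace_mul_cycle,
    eU_t_mul hM, Matrix.one_mul, Matrix.trace_diagonal]

end herm

lemma sqrt_eq' {B : Matrix (Fin n) (Fin n) ℝ} (hB : B.PosSemidef) :
    hB.sqrt = eU hB.1 * Matrix.diagonal (fun i => Real.sqrt (hB.1.eigenvalues i)) * (eU hB.1)ᵀ := by
  rw [Matrix.PosSemidef.sqrt, Matrix.star_eq_conjTranspose, Matrix.conjTranspose_eq_transpose_of_trivial]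
  rfl

lemma _root_.Matrix.PosSemidef.posSemidef_sqrt {B : Matrix (Fin n) (Fin n) ℝ} (hB : B.PosSemidef) :
    hB.sqrt.PosSemidef := by
  rw [sqrt_eq']
  exact conj_diag_psd hB.1 _ (fun i => Real.sqrt_nonneg _)

lemma _root_.Matrix.PosSemidef.sqrt_mul_self {B : Matrix (Fin n) (Fin n) ℝ} (hB : B.PosSemidef) :
    hB.sqrt * hB.sqrt = B := by
  rw [sqrt_eq']
  conv_rhs => rw [spectral' hB.1]
  have e : ∀ X : Matrix (Fin n) (Fin n) ℝ, (eU hB.1)ᵀ * (eU hB.1 * X) = X := by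
    intro X; rw [← Matrix.mul_assoc, eU_t_mul hB.1, Matrix.one_mul]
  simp only [Matrix.mul_assoc, e]
  rw [← Matrix.mul_assoc (Matrix.diagonal _), Matrix.diagonal_mul_diagonal]
  have hd : (fun i => Real.sqrt (hB.1.eigenvalues i) * Real.sqrt (hB.1.eigenvalues i))
      = hB.1.eigenvalues := funext fun i => Real.mul_self_sqrt (hB.eigenvalues_nonneg i)
  rw [hd]

lemma sqrt_sub_sqrt_iInf_psd {B : Matrix (Fin n) (Fin n) ℝ} (hB : B.PosSemidef) :
    (hB.sqrt - Real.sqrt (⨅ i, hB.1.eigenvalues i) • 1).PosSemidef := by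
  have hlam_le : ∀ j, (⨅ i, hB.1.eigenvalues i) ≤ hB.1.eigenvalues j :=
    fun j => ciInf_le (Set.Finite.bddBelow (Set.finite_range _)) j
  have hBpsd : (B - (⨅ i, hB.1.eigenvalues i) • 1).PosSemidef := psd_sub_smul hB.1 hlam_le
  have hS := hB.posSemidef_sqrt
  apply psd_sub_smul hS.1
  intro i
  have hmu0 : 0 ≤ hS.1.eigenvalues i := hS.eigenvalues_nonneg i
  have hu : ucol hS.1 i ⬝ᵥ ucol hS.1 i = 1 := ucol_dot hS.1 i
  have hSu : hB.sqrt *ᵥ ucol hS.1 i = hS.1.eigenvalues i • ucol hS.1 i := mulVec_ucol hS.1 i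
  have hBu : B *ᵥ ucol hS.1 i = (hS.1.eigenvalues i ^ 2) • ucol hS.1 i := by
    have h0 : (hB.sqrt * hB.sqrt) *ᵥ ucol hS.1 i = (hS.1.eigenvalues i ^ 2) • ucol hS.1 i := by
      rw [← Matrix.mulVec_mulVec, hSu, Matrix.mulVec_smul, hSu, smul_smul, ← pow_two]
    rwa [hB.sqrt_mul_self] at h0
  have h2 := hBpsd.dotProduct_mulVec_nonneg (ucol hS.1 i)
  rw [star_trivial, Matrix.sub_mulVec, Matrix.smul_mulVec, Matrix.one_mulVec, hBu,
    dotProduct_sub, dotProduct_smul, dotProduct_smul, hu] at h2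
  simp only [smul_eq_mul, mul_one] at h2
  calc Real.sqrt (⨅ i, hB.1.eigenvalues i) ≤ Real.sqrt (hS.1.eigenvalues i ^ 2) :=
        Real.sqrt_le_sqrt (by linarith)
    _ = hS.1.eigenvalues i := by rw [Real.sqrt_sq hmu0]

end SqrtAux

open Matrix

open SqrtAux

theorem sqrt_update_error_bound {n k : ℕ} (α : ℝ) (hα : α = 1 ∨ α = -1)
    (A : Matrix (Fin n) (Fin n) ℝ) (Z : Matrix (Fin n) (Fin k) ℝ)
    (hA : A.PosDef) (hB : (A + α • (Z * Zᵀ)).PosDef)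
    (Ct : Matrix (Fin n) (Fin n) ℝ) (hC : Ct.PosSemidef)
    (hpos : (hA.posSemidef.sqrt + α • Ct).PosDef) :
    frobNorm (hB.posSemidef.sqrt - (hA.posSemidef.sqrt + α • Ct)) ≤
      Real.sqrt (Real.sqrt n *
        frobNorm (Z * Zᵀ - hA.posSemidef.sqrt * Ct - Ct * hA.posSemidef.sqrt - α • Ct ^ 2)) ∧
    specNorm (hB.posSemidef.sqrt - (hA.posSemidef.sqrt + α • Ct)) ≤
      min (frobNorm (Z * Zᵀ - hA.posSemidef.sqrt * Ct - Ct * hA.posSemidef.sqrt - α • Ct ^ 2) /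
            Real.sqrt (lambdaMin hB.1))
        (Real.sqrt (Real.sqrt n *
          frobNorm (Z * Zᵀ - hA.posSemidef.sqrt * Ct - Ct * hA.posSemidef.sqrt - α • Ct ^ 2))) := by
  have hα2 : α * α = 1 := by rcases hα with h | h <;> rw [h] <;> norm_num
  set P := hA.posSemidef.sqrt with hPdef
  set S := hB.posSemidef.sqrt with hSdef
  set Tm := P + α • Ct with hTdef
  set R := Z * Zᵀ - P * Ct - Ct * P - α • Ct ^ 2 with hRdef
  set E := S - Tm with hEdef
  have hSpsd : S.PosSemidef := hB.posSemidef.posSemidef_sqrt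
  have hSh : S.IsHermitian := hSpsd.1
  have hTh : Tm.IsHermitian := hpos.1
  have hEh : E.IsHermitian := hSh.sub hTh
  have hEt : Eᵀ = E := transpose_eq hEh
  have key : S * E + E * Tm = α • R := by
    have hSS : S * S = A + α • (Z * Zᵀ) := hB.posSemidef.sqrt_mul_self
    have hPP : P * P = A := hA.posSemidef.sqrt_mul_self
    have expand : S * E + E * Tm = S * S - Tm * Tm := by
      rw [hEdef, Matrix.mul_sub, Matrix.sub_mul]
      abel
    rw [expand, hSS, hTdef, hRdef]
    simp only [Matrix.add_mul, Matrix.mul_add, Matrix.smul_mul, Matrix.mul_smul, smul_smul,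
      hα2, one_smul, smul_sub, smul_add, pow_two, hPP]
    abel
  have hfrR0 : 0 ≤ frobNorm R := Real.sqrt_nonneg _
  have hqd_le : ∀ i, |ucol hEh i ⬝ᵥ (R *ᵥ ucol hEh i)| ≤ frobNorm R := by
    intro i
    rw [← diag_conj hEh R i]
    have h1 : (((eU hEh)ᵀ * R * eU hEh) i i) ^ 2
        ≤ ∑ p, ∑ q, (((eU hEh)ᵀ * R * eU hEh) p q) ^ 2 := by
      calc (((eU hEh)ᵀ * R * eU hEh) i i) ^ 2
          ≤ ∑ q, (((eU hEh)ᵀ * R * eU hEh) i q) ^ 2 :=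
            Finset.single_le_sum (f := fun q => (((eU hEh)ᵀ * R * eU hEh) i q) ^ 2)
              (fun q _ => sq_nonneg _) (Finset.mem_univ i)
        _ ≤ ∑ p, ∑ q, (((eU hEh)ᵀ * R * eU hEh) p q) ^ 2 :=
            Finset.single_le_sum (f := fun p => ∑ q, (((eU hEh)ᵀ * R * eU hEh) p q) ^ 2)
              (fun p _ => Finset.sum_nonneg fun q _ => sq_nonneg _) (Finset.mem_univ i)
    calc |((eU hEh)ᵀ * R * eU hEh) i i|
        = Real.sqrt ((((eU hEh)ᵀ * R * eU hEh) i i) ^ 2) := (Real.sqrt_sq_eq_abs _).symm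
      _ ≤ Real.sqrt (∑ p, ∑ q, (((eU hEh)ᵀ * R * eU hEh) p q) ^ 2) := Real.sqrt_le_sqrt h1
      _ = frobNorm R := by
          rw [sum_sq_conj _ R (eU_t_mul hEh) (eU_mul_t hEh)]; rfl
  have hSc : (S - Real.sqrt (lambdaMin hB.1) • 1).PosSemidef :=
    sqrt_sub_sqrt_iInf_psd hB.posSemidef
  have hkey : ∀ i, (hEh.eigenvalues i) ^ 2 ≤ |ucol hEh i ⬝ᵥ (R *ᵥ ucol hEh i)| ∧
      |hEh.eigenvalues i| * Real.sqrt (lambdaMin hB.1)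
        ≤ |ucol hEh i ⬝ᵥ (R *ᵥ ucol hEh i)| := by
    intro i
    set u := ucol hEh i with hudef
    set d := hEh.eigenvalues i with hddef
    have hu : u ⬝ᵥ u = 1 := ucol_dot hEh i
    have hEu : E *ᵥ u = d • u := mulVec_ucol hEh i
    set qS := u ⬝ᵥ (S *ᵥ u) with hqSdef
    set qT := u ⬝ᵥ (Tm *ᵥ u) with hqTdef
    set qR := u ⬝ᵥ (R *ᵥ u) with hqRdef
    have e1 : u ⬝ᵥ ((S * E) *ᵥ u) = d * qS := by
      rw [← Matrix.mulVec_mulVec, hEu, Matrix.mulVec_smul, dotProduct_smul, smul_eq_mul]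
    have e2 : u ⬝ᵥ ((E * Tm) *ᵥ u) = d * qT := by
      rw [← Matrix.mulVec_mulVec, dotProduct_mulVec, ← Matrix.mulVec_transpose, hEt, hEu,
        smul_dotProduct, smul_eq_mul]
    have e3 : u ⬝ᵥ ((α • R) *ᵥ u) = α * qR := by
      rw [Matrix.smul_mulVec, dotProduct_smul, smul_eq_mul]
    have e4 : qS - qT = d := by
      have h0 : u ⬝ᵥ (E *ᵥ u) = d := by
        rw [hEu, dotProduct_smul, smul_eq_mul, hu, mul_one]
      rw [← h0, show E *ᵥ u = S *ᵥ u - Tm *ᵥ u by rw [hEdef, Matrix.sub_mulVec],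
        dotProduct_sub]
    have heq : d * (qS + qT) = α * qR := by
      have h1 : u ⬝ᵥ ((S * E + E * Tm) *ᵥ u) = u ⬝ᵥ ((α • R) *ᵥ u) := by rw [key]
      rw [Matrix.add_mulVec, dotProduct_add, e1, e2, e3] at h1
      rw [mul_add]
      exact h1
    have hqT : 0 ≤ qT := by simpa using hpos.posSemidef.dotProduct_mulVec_nonneg u
    have hqS : 0 ≤ qS := by simpa using hSpsd.dotProduct_mulVec_nonneg u
    have hqSc : Real.sqrt (lambdaMin hB.1) ≤ qS := by
      have h2 := hSc.dotProduct_mulVec_nonneg u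
      rw [star_trivial, Matrix.sub_mulVec, Matrix.smul_mulVec, Matrix.one_mulVec,
        dotProduct_sub, dotProduct_smul, hu] at h2
      simp only [smul_eq_mul, mul_one] at h2
      linarith
    have habs : |α * qR| = |qR| := by
      rcases hα with h6 | h6 <;> rw [h6] <;> simp
    constructor
    · rcases le_or_gt 0 d with h | h
      · have h5 : d ^ 2 ≤ α * qR := by nlinarith [mul_nonneg h hqT]
        calc d ^ 2 ≤ α * qR := h5
          _ ≤ |α * qR| := le_abs_self _
          _ = |qR| := habs
      · have h5 : d ^ 2 ≤ -(α * qR) := by nlinarith [mul_nonneg (neg_nonneg.mpr h.le) hqS]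
        calc d ^ 2 ≤ -(α * qR) := h5
          _ ≤ |α * qR| := neg_le_abs _
          _ = |qR| := habs
    · have h5 : |d| * (qS + qT) = |qR| := by
        rw [← abs_of_nonneg (by linarith : (0:ℝ) ≤ qS + qT), ← abs_mul, heq, habs]
      calc |d| * Real.sqrt (lambdaMin hB.1) ≤ |d| * (qS + qT) :=
            mul_le_mul_of_nonneg_left (by linarith) (abs_nonneg _)
        _ = |qR| := h5
  have hsum : ∑ i, ∑ j, E i j ^ 2 = ∑ i, hEh.eigenvalues i ^ 2 := sum_sq_entries hEh
  have hstep1 : ∑ i, (hEh.eigenvalues i) ^ 2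
      ≤ ∑ i, |ucol hEh i ⬝ᵥ (R *ᵥ ucol hEh i)| :=
    Finset.sum_le_sum fun i _ => (hkey i).1
  have hstep2 : ∑ i, |ucol hEh i ⬝ᵥ (R *ᵥ ucol hEh i)|
      ≤ Real.sqrt n * Real.sqrt (∑ i, (ucol hEh i ⬝ᵥ (R *ᵥ ucol hEh i)) ^ 2) := by
    have h := Real.sum_mul_le_sqrt_mul_sqrt Finset.univ (fun _ => (1:ℝ))
      (fun i => |ucol hEh i ⬝ᵥ (R *ᵥ ucol hEh i)|)
    simpa [sq_abs, Finset.card_univ] using h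
  have hstep3 : ∑ i, (ucol hEh i ⬝ᵥ (R *ᵥ ucol hEh i)) ^ 2 ≤ ∑ p, ∑ q, R p q ^ 2 := by
    rw [← sum_sq_conj _ R (eU_t_mul hEh) (eU_mul_t hEh)]
    apply Finset.sum_le_sum
    intro i _
    rw [← diag_conj hEh R i]
    exact Finset.single_le_sum (f := fun q => (((eU hEh)ᵀ * R * eU hEh) i q) ^ 2)
      (fun q _ => sq_nonneg _) (Finset.mem_univ i)
  have goal1 : frobNorm E ≤ Real.sqrt (Real.sqrt n * frobNorm R) := by
    show Real.sqrt (∑ i, ∑ j, E i j ^ 2) ≤ Real.sqrt (Real.sqrt n * frobNorm R)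
    apply Real.sqrt_le_sqrt
    calc ∑ i, ∑ j, E i j ^ 2 = ∑ i, hEh.eigenvalues i ^ 2 := hsum
      _ ≤ ∑ i, |ucol hEh i ⬝ᵥ (R *ᵥ ucol hEh i)| := hstep1
      _ ≤ Real.sqrt n * Real.sqrt (∑ i, (ucol hEh i ⬝ᵥ (R *ᵥ ucol hEh i)) ^ 2) := hstep2
      _ ≤ Real.sqrt n * frobNorm R := by
          apply mul_le_mul_of_nonneg_left _ (Real.sqrt_nonneg _)
          exact Real.sqrt_le_sqrt hstep3
  refine ⟨goal1, ?_⟩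
  set m := min (frobNorm R / Real.sqrt (lambdaMin hB.1))
    (Real.sqrt (Real.sqrt n * frobNorm R)) with hmdef
  have hm0 : 0 ≤ m := le_min (div_nonneg hfrR0 (Real.sqrt_nonneg _)) (Real.sqrt_nonneg _)
  have hdm : ∀ i, hEh.eigenvalues i ^ 2 ≤ m ^ 2 := by
    intro i
    haveI : Nonempty (Fin n) := ⟨i⟩
    have hn1 : (1:ℝ) ≤ n := by
      have h := i.pos
      exact_mod_cast h
    have hcpos : (0:ℝ) < Real.sqrt (lambdaMin hB.1) := by
      apply Real.sqrt_pos.mpr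
      obtain ⟨x, hx⟩ := Finite.exists_min hB.1.eigenvalues
      exact lt_of_lt_of_le (hB.eigenvalues_pos x) (le_ciInf hx)
    have hda : |hEh.eigenvalues i| ≤ frobNorm R / Real.sqrt (lambdaMin hB.1) :=
      (le_div_iff₀ hcpos).mpr ((hkey i).2.trans (hqd_le i))
    have ha : hEh.eigenvalues i ^ 2 ≤ (frobNorm R / Real.sqrt (lambdaMin hB.1)) ^ 2 := by
      rw [← sq_abs]
      exact pow_le_pow_left₀ (abs_nonneg _) hda 2
    have hb : hEh.eigenvalues i ^ 2 ≤ (Real.sqrt (Real.sqrt n * frobNorm R)) ^ 2 := by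
      rw [Real.sq_sqrt (mul_nonneg (Real.sqrt_nonneg _) hfrR0)]
      have h1 : hEh.eigenvalues i ^ 2 ≤ frobNorm R := (hkey i).1.trans (hqd_le i)
      have h2 : (1:ℝ) ≤ Real.sqrt n := by
        rw [show (1:ℝ) = Real.sqrt 1 by rw [Real.sqrt_one]]
        exact Real.sqrt_le_sqrt hn1
      nlinarith
    rcases le_total (frobNorm R / Real.sqrt (lambdaMin hB.1))
        (Real.sqrt (Real.sqrt n * frobNorm R)) with h | h
    · rwa [hmdef, min_eq_left h]
    · rwa [hmdef, min_eq_right h]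
  have hpsd : ((m ^ 2) • 1 - E * E).PosSemidef := psd_smul_sub_sq hEh hdm
  have hEE : Eᴴ * E = E * E := by rw [hEh.eq]
  have heig : ∀ j, (Matrix.isHermitian_transpose_mul_self E).eigenvalues j ≤ m ^ 2 := by
    intro j
    apply eig_le_of_psd (Matrix.isHermitian_transpose_mul_self E) _ j
    rw [hEt]
    exact hpsd
  show (⨆ j, Real.sqrt ((Matrix.isHermitian_transpose_mul_self E).eigenvalues j)) ≤ m
  apply Real.iSup_le _ hm0
  intro j
  calc Real.sqrt ((Matrix.isHermitian_transpose_mul_self E).eigenvalues j)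
      ≤ Real.sqrt (m ^ 2) := Real.sqrt_le_sqrt (heig j)
    _ = m := by rw [Real.sqrt_sq hm0]
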